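/- For all n ≥ 8 there exists a compact set X ⊆ ℝ^n, the union of two line segments sharing an endpoint, with ‖X‖_∞ = 1, such that its unique lexicographic maximum is x* = (0,...,0,1), yet for every c ≥ 2, any exact minimizer x_{c,0} of the exponential loss L_c over X satisfies σ_n(x*) − σ_n(x_{c,0}) ≥ 1/2. -/

import Mathlib

noncomputable def sortedComp {n : ℕ} (x : Fin n → ℝ) (k : Fin n) : ℝ :=
  x (Tuple.sort x k)

def IsLexMax {n : ℕ} (X : Set (Fin n → ℝ)) (y : Fin n → ℝ) : Prop :=
  y ∈ X ∧ ∀ x ∈ X, x = y ∨ ∃ i : Fin n,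
    (∀ j : Fin n, j < i → sortedComp y j = sortedComp x j) ∧
    sortedComp x i < sortedComp y i

/-- The exponential loss. -/
noncomputable def expLoss {n : ℕ} (c : ℝ) (x : Fin n → ℝ) : ℝ :=
  ∑ i, Real.exp (-c * x i)

/-- The sup of the sup-norms of elements of X, i.e. ‖X‖_∞. -/
noncomputable def supNorm {n : ℕ} (X : Set (Fin n → ℝ)) : ℝ :=
  sSup ((fun x : Fin n → ℝ => ‖x‖) '' X)

lemma sorted_le_last {n : ℕ} (hn : 0 < n) (x : Fin n → ℝ) (i : Fin n) :
    x i ≤ sortedComp x ⟨n - 1, by omega⟩ := by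
  have hmono := Tuple.monotone_sort x
  have h1 : x i = (x ∘ Tuple.sort x) ((Tuple.sort x)⁻¹ i) := by simp
  rw [h1]
  have hlt := (((Tuple.sort x)⁻¹ : Equiv.Perm (Fin n)) i).isLt
  exact hmono (by rw [Fin.le_def]; simp only; omega)

lemma sorted_zero_le {n : ℕ} (hn : 0 < n) (x : Fin n → ℝ) (i : Fin n) :
    sortedComp x ⟨0, hn⟩ ≤ x i := by
  have hmono := Tuple.monotone_sort x
  have h1 : x i = (x ∘ Tuple.sort x) ((Tuple.sort x)⁻¹ i) := by simp
  rw [h1]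
  exact hmono (by rw [Fin.le_def]; simp only; omega)

lemma sorted_two_valued {n : ℕ} (hn : 2 ≤ n) (a : ℝ) (ha : 0 < a) :
    (∀ j : Fin n, j.val < n - 1 →
      sortedComp (fun i : Fin n => if i.val = n - 1 then a else 0) j = 0) ∧
    sortedComp (fun i : Fin n => if i.val = n - 1 then a else 0) ⟨n - 1, by omega⟩ = a := by
  set x : Fin n → ℝ := fun i : Fin n => if i.val = n - 1 then a else 0 with hx
  have hlast : sortedComp x ⟨n - 1, by omega⟩ = a := by
    have h1 : x ⟨n - 1, by omega⟩ ≤ sortedComp x ⟨n - 1, by omega⟩ :=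
      sorted_le_last (by omega) x _
    have h2 : x ⟨n - 1, by omega⟩ = a := by simp [hx]
    have h3 : sortedComp x ⟨n - 1, by omega⟩ = a ∨ sortedComp x ⟨n - 1, by omega⟩ = 0 := by
      unfold sortedComp
      by_cases h : (Tuple.sort x ⟨n - 1, by omega⟩ : Fin n).val = n - 1
      · left; simp only [hx] at h ⊢; simp [h]
      · right; simp only [hx] at h ⊢; simp [h]
    rcases h3 with h3 | h3
    · exact h3
    · rw [h2] at h1; rw [h3] at h1; linarith
  refine ⟨fun j hj => ?_, hlast⟩
  have hs : (Tuple.sort x (⟨n - 1, by omega⟩ : Fin n)).val = n - 1 := by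
    by_contra h
    have : sortedComp x ⟨n - 1, by omega⟩ = 0 := by unfold sortedComp; simp only [hx] at h ⊢; simp [h]
    rw [hlast] at this; linarith
  by_contra h
  have h0 : sortedComp x j ≠ 0 := h
  have hsj : (Tuple.sort x j).val = n - 1 := by
    by_contra h'
    exact h0 (by unfold sortedComp; simp only [hx] at h' ⊢; simp [h'])
  have hje : j = ⟨n - 1, by omega⟩ :=
    (Tuple.sort x).injective (Fin.ext (hsj.trans hs.symm))
  rw [hje] at hj; simp at hj

lemma sum_three {n : ℕ} (hn : 8 ≤ n) (f : Fin n → ℝ) (A B C : ℝ)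
    (h0 : f ⟨0, by omega⟩ = A) (hl : f ⟨n - 1, Nat.sub_lt (by omega) one_pos⟩ = B)
    (ho : ∀ i : Fin n, i.val ≠ 0 → i.val ≠ n - 1 → f i = C) :
    ∑ i, f i = A + B + ((n : ℝ) - 2) * C := by
  classical
  set i0 : Fin n := ⟨0, by omega⟩
  set il : Fin n := ⟨n - 1, Nat.sub_lt (by omega) one_pos⟩
  have hne : il ≠ i0 := by simp [i0, il, Fin.ext_iff]; omega
  rw [← Finset.add_sum_erase _ _ (Finset.mem_univ i0), h0]
  rw [← Finset.add_sum_erase _ _ (Finset.mem_erase.mpr ⟨hne, Finset.mem_univ il⟩), hl]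
  have hconst : ∀ i ∈ ((Finset.univ : Finset (Fin n)).erase i0).erase il, f i = C := by
    intro i hi
    simp only [Finset.mem_erase] at hi
    exact ho i (by simpa [i0, Fin.ext_iff] using hi.2.1) (by simpa [il, Fin.ext_iff] using hi.1)
  rw [Finset.sum_congr rfl hconst, Finset.sum_const]
  have hcard : (((Finset.univ : Finset (Fin n)).erase i0).erase il).card = n - 2 := by
    rw [Finset.card_erase_of_mem (Finset.mem_erase.mpr ⟨hne, Finset.mem_univ il⟩),
      Finset.card_erase_of_mem (Finset.mem_univ i0)]
    simp only [Finset.card_univ, Fintype.card_fin]; omega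
  rw [hcard]
  have hcast : ((n - 2 : ℕ) : ℝ) = (n : ℝ) - 2 := by
    have h2 : (2 : ℕ) ≤ n := by omega
    push_cast [h2]; ring
  rw [nsmul_eq_mul, hcast]; ring

lemma numeric_exp : Real.exp 1 + Real.exp (-1) + 6 * Real.exp (-(1/2 : ℝ)) < 7 := by
  have h1 := Real.exp_one_lt_d9
  have h2 := Real.exp_one_gt_d9
  have he : Real.exp (-1) * Real.exp 1 = 1 := by
    rw [← Real.exp_add]; norm_num
  have hn1 : Real.exp (-1) < 0.36788 := by nlinarith [Real.exp_pos (-1)]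
  have hsq : Real.exp (-(1/2 : ℝ)) * Real.exp (-(1/2 : ℝ)) = Real.exp (-1) := by
    rw [← Real.exp_add]; norm_num
  have hn2 : Real.exp (-(1/2 : ℝ)) < 0.6066 := by nlinarith [Real.exp_pos (-(1/2 : ℝ))]
  linarith

theorem unstable_set_exp_loss_far {n : ℕ} (hn : 8 ≤ n) :
    ∃ X : Set (Fin n → ℝ),
      IsCompact X ∧
      (∃ u v w : Fin n → ℝ, X = segment ℝ u v ∪ segment ℝ v w) ∧
      supNorm X = 1 ∧
      IsLexMax X (fun i => if i.val = n - 1 then 1 else 0) ∧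
      (∀ y, IsLexMax X y → y = fun i => if i.val = n - 1 then 1 else 0) ∧
      (∀ c : ℝ, 2 ≤ c → ∀ xc ∈ X, (∀ x ∈ X, expLoss c xc ≤ expLoss c x) →
        (1 : ℝ) / 2 ≤
          sortedComp (fun i : Fin n => if i.val = n - 1 then (1 : ℝ) else 0) ⟨n - 1, by omega⟩ -
          sortedComp xc ⟨n - 1, by omega⟩) := by
  have hn2 : 2 ≤ n := by omega
  set u : Fin n → ℝ := fun i => if i.val = n - 1 then 1 else 0 with hu
  set v : Fin n → ℝ := fun i => if i.val = n - 1 then (1 : ℝ)/2 else 0 with hv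
  set w : Fin n → ℝ :=
    fun i => if i.val = 0 then -(1 : ℝ)/2 else if i.val = n - 1 then 1/2 else 1/4 with hw
  set X : Set (Fin n → ℝ) := segment ℝ u v ∪ segment ℝ v w with hX
  -- membership characterizations
  have hmem1 : ∀ x ∈ segment ℝ u v, ∃ t : ℝ, 1/2 ≤ t ∧ t ≤ 1 ∧
      x = fun i : Fin n => if i.val = n - 1 then t else 0 := by
    rintro x ⟨a, b, ha, hb, hab, rfl⟩
    refine ⟨a + b/2, by linarith, by linarith, ?_⟩
    funext i
    simp only [Pi.add_apply, Pi.smul_apply, smul_eq_mul, hu, hv]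
    split_ifs <;> ring
  have hmem2 : ∀ x ∈ segment ℝ v w, ∃ b : ℝ, 0 ≤ b ∧ b ≤ 1 ∧
      x = fun i : Fin n => if i.val = 0 then -b/2 else if i.val = n - 1 then 1/2 else b/4 := by
    rintro x ⟨a, b, ha, hb, hab, rfl⟩
    refine ⟨b, hb, by linarith, ?_⟩
    funext i
    simp only [Pi.add_apply, Pi.smul_apply, smul_eq_mul, hv, hw]
    split_ifs with h1 h2 <;> first
      | (exfalso; omega)
      | linarith
      | ring
  have hmem2' : ∀ b : ℝ, 0 ≤ b → b ≤ 1 →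
      (fun i : Fin n => if i.val = 0 then -b/2 else if i.val = n - 1 then 1/2 else b/4)
        ∈ segment ℝ v w := by
    intro b hb0 hb1
    refine ⟨1 - b, b, by linarith, hb0, by ring, ?_⟩
    funext i
    simp only [Pi.add_apply, Pi.smul_apply, smul_eq_mul, hv, hw]
    split_ifs with h1 h2 <;> first
      | (exfalso; omega)
      | linarith
      | ring
  -- sorted component facts
  have hU := sorted_two_valued (n := n) hn2 1 one_pos
  have hulast : sortedComp u ⟨n - 1, by omega⟩ = 1 := hU.2
  have huz : ∀ j : Fin n, j.val < n - 1 → sortedComp u j = 0 := hU.1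
  -- helper for lex max
  have H1 : ∀ t : ℝ, 1/2 ≤ t → t < 1 →
      ∃ i : Fin n, (∀ j : Fin n, j < i → sortedComp u j =
          sortedComp (fun k : Fin n => if k.val = n - 1 then t else 0) j) ∧
        sortedComp (fun k : Fin n => if k.val = n - 1 then t else 0) i <
          sortedComp u i := by
    intro t ht1 ht2
    have hT := sorted_two_valued (n := n) hn2 t (by linarith)
    refine ⟨⟨n - 1, by omega⟩, fun j hj => ?_, ?_⟩
    · rw [Fin.lt_def] at hj
      rw [huz j (by simpa using hj), hT.1 j (by simpa using hj)]
    · rw [hT.2, hulast]; exact ht2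
  have hXmax : IsLexMax X u := by
    constructor
    · exact Or.inl (left_mem_segment ℝ u v)
    · rintro x (hx | hx)
      · obtain ⟨t, ht1, ht2, rfl⟩ := hmem1 x hx
        rcases eq_or_lt_of_le ht2 with h | h
        · left; rw [h, hu]
        · right; exact H1 t ht1 h
      · obtain ⟨b, hb0, hb1, rfl⟩ := hmem2 x hx
        rcases eq_or_lt_of_le hb0 with h | h
        · right
          have hbeq : (fun i : Fin n => if i.val = 0 then -b/2 else
              if i.val = n - 1 then (1:ℝ)/2 else b/4) =
              (fun k : Fin n => if k.val = n - 1 then (1/2 : ℝ) else 0) := by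
            funext i
            rw [← h]
            split_ifs <;> first | (exfalso; omega) | norm_num
          rw [hbeq]
          exact H1 (1/2) le_rfl (by norm_num)
        · right
          refine ⟨⟨0, by omega⟩, fun j hj => absurd hj (by rw [Fin.lt_def]; simp), ?_⟩
          have hle := sorted_zero_le (by omega)
            (fun i : Fin n => if i.val = 0 then -b/2 else
              if i.val = n - 1 then (1:ℝ)/2 else b/4) ⟨0, by omega⟩
          norm_num at hle
          have hz : sortedComp u ⟨0, by omega⟩ = 0 := huz _ (by simp; omega)
          rw [hz]
          linarith
  refine ⟨X, ?_, ⟨u, v, w, rfl⟩, ?_, hXmax, ?_, ?_⟩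
  · -- compactness
    apply IsCompact.union
    · rw [segment_eq_image]
      exact isCompact_Icc.image
        (((continuous_const.sub continuous_id).smul continuous_const).add
          (continuous_id.smul continuous_const))
    · rw [segment_eq_image]
      exact isCompact_Icc.image
        (((continuous_const.sub continuous_id).smul continuous_const).add
          (continuous_id.smul continuous_const))
  · -- supNorm
    unfold supNorm
    apply IsGreatest.csSup_eq
    constructor
    · refine ⟨u, Or.inl (left_mem_segment ℝ u v), ?_⟩
      apply le_antisymm
      · rw [pi_norm_le_iff_of_nonneg (by norm_num)]
        intro i
        simp only [hu]
        split_ifs <;> simp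
      · have := norm_le_pi_norm u ⟨n - 1, by omega⟩
        have hval : u ⟨n - 1, by omega⟩ = 1 := by simp [hu]
        rw [hval] at this
        simpa using this
    · rintro r ⟨x, hx, rfl⟩
      rw [pi_norm_le_iff_of_nonneg (by norm_num)]
      intro i
      rcases hx with hx | hx
      · obtain ⟨t, ht1, ht2, rfl⟩ := hmem1 x hx
        simp only
        split_ifs
        · rw [Real.norm_eq_abs, abs_le]; constructor <;> linarith
        · simp
      · obtain ⟨b, hb0, hb1, rfl⟩ := hmem2 x hx
        simp only
        split_ifs
        · rw [Real.norm_eq_abs, abs_le]; constructor <;> linarith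
        · rw [Real.norm_eq_abs, abs_le]; constructor <;> linarith
        · rw [Real.norm_eq_abs, abs_le]; constructor <;> linarith
  · -- uniqueness
    intro y hy
    rcases hy.2 u (Or.inl (left_mem_segment ℝ u v)) with h | ⟨i, hpre, hlt⟩
    · exact h.symm
    · rcases hXmax.2 y hy.1 with h' | ⟨i', hpre', hlt'⟩
      · exact h'
      · exfalso
        rcases lt_trichotomy i i' with hii | hii | hii
        · have := hpre' i hii; linarith
        · rw [hii] at hlt; linarith
        · have := hpre i' hii; linarith
  · -- minimizer far from lex max
    intro c hc xc hxc hmin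
    rw [hulast]
    suffices hgoal : sortedComp xc ⟨n - 1, by omega⟩ ≤ 1/2 by linarith
    have hcpos : (0 : ℝ) < c := by linarith
    rcases hxc with hx | hx
    · obtain ⟨t, ht1, ht2, rfl⟩ := hmem1 xc hx
      rcases le_or_gt t (1/2) with h | h
      · unfold sortedComp
        simp only
        split_ifs
        · exact h
        · norm_num
      · exfalso
        -- the candidate point p with parameter b = 2/c
        set b : ℝ := 2/c with hb
        have hb0 : 0 ≤ b := by positivity
        have hb1 : b ≤ 1 := by
          rw [hb, div_le_one hcpos]; linarith
        have hp := hmem2' b hb0 hb1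
        have hminp := hmin _ (Or.inr hp)
        -- compute the two losses
        have hLxc : expLoss c (fun i : Fin n => if i.val = n - 1 then t else 0) =
            1 + Real.exp (-c * t) + ((n : ℝ) - 2) * 1 := by
          unfold expLoss
          apply sum_three hn
          · simp only
            rw [if_neg (by omega)]
            simp
          · show Real.exp (-c * if n - 1 = n - 1 then t else 0) = Real.exp (-c * t)
            rw [if_pos rfl]
          · intro i hi0 hil
            simp only
            rw [if_neg hil]
            simp
        have hLp : expLoss c (fun i : Fin n => if i.val = 0 then -b/2 else
            if i.val = n - 1 then (1:ℝ)/2 else b/4) =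
            Real.exp 1 + Real.exp (-c * (1/2)) + ((n : ℝ) - 2) * Real.exp (-(1/2)) := by
          unfold expLoss
          apply sum_three hn
          · show Real.exp (-c * if (0 : ℕ) = 0 then -b/2 else
                if (0 : ℕ) = n - 1 then (1:ℝ)/2 else b/4) = Real.exp 1
            rw [if_pos rfl]
            congr 1
            have hcne : c ≠ 0 := ne_of_gt hcpos
            rw [hb]; field_simp
          · show Real.exp (-c * if n - 1 = 0 then -b/2 else
                if n - 1 = n - 1 then (1:ℝ)/2 else b/4) = Real.exp (-c * (1/2))
            rw [if_neg (by omega), if_pos rfl]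
          · intro i hi0 hil
            simp only
            rw [if_neg hi0, if_neg hil]
            congr 1
            have hcne : c ≠ 0 := ne_of_gt hcpos
            rw [hb]; field_simp; ring
        rw [hLxc, hLp] at hminp
        have h1 : Real.exp (-c) ≤ Real.exp (-c * t) := by
          apply Real.exp_le_exp.mpr
          nlinarith
        have h2 : Real.exp (-c * (1/2)) ≤ Real.exp (-1) := by
          apply Real.exp_le_exp.mpr
          nlinarith
        have h3 : ((n : ℝ) - 2) * Real.exp (-(1/2 : ℝ)) ≤
            6 * Real.exp (-(1/2 : ℝ)) + ((n : ℝ) - 8) := by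
          have he1 : Real.exp (-(1/2 : ℝ)) ≤ 1 := by
            rw [Real.exp_le_one_iff]; norm_num
          have hn8 : (8 : ℝ) ≤ (n : ℝ) := by exact_mod_cast hn
          nlinarith [Real.exp_pos (-(1/2 : ℝ))]
        have h4 := numeric_exp
        have h5 : (0 : ℝ) < Real.exp (-c) := Real.exp_pos _
        have hn8 : (8 : ℝ) ≤ (n : ℝ) := by exact_mod_cast hn
        linarith
    · obtain ⟨b, hb0, hb1, rfl⟩ := hmem2 xc hx
      unfold sortedComp
      simp only
      split_ifs
      · linarith
      · norm_num
      · linarith
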